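/- arXiv:1806.02955 — 2 statements merged into one kernel-verified Lean document; each statement's English description precedes it below -/
import Mathlib

section
/- Let ψ : ℝ → [0,∞) be a symmetric function with ∫_ℝ ψ = 1 and support contained in (−1,1), and for δ > 0 set ψ_δ(ξ) := δ^{-1}ψ(ξ/δ). Let g : ℝ → [0,1] be measurable and let F : ℝ → [0,1] be nondecreasing with lim_{ξ→−∞} F(ξ) = 0 and lim_{ξ→+∞} F(ξ) = 1. Then | ∫_ℝ g(ξ) ( F(ξ) − ∫_ℝ ψ_δ(ξ−ζ) F(ζ) dζ ) dξ | ≤ δ. -/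
open MeasureTheory Set Filter
open scoped Topology ENNReal

noncomputable section

lemma cdf_shift_lintegral_le (F : ℝ → ℝ) (hFmono : Monotone F)
    (hF : ∀ ξ, F ξ ∈ Icc (0 : ℝ) 1) (η : ℝ) (hη : 0 ≤ η) :
    ∫⁻ ξ : ℝ, ENNReal.ofReal (F ξ - F (ξ - η)) ≤ ENNReal.ofReal η := by
  have hFm : Measurable F := hFmono.measurable
  have hfm : Measurable fun ξ : ℝ => ENNReal.ofReal (F ξ - F (ξ - η)) :=
    (hFm.sub (hFm.comp (measurable_id.sub measurable_const))).ennreal_ofReal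
  set ν := volume.withDensity (fun ξ : ℝ => ENNReal.ofReal (F ξ - F (ξ - η))) with hν
  have huniv : (univ : Set ℝ) = ⋃ n : ℕ, Ioc (-(n : ℝ)) n := by
    ext x
    simp only [mem_univ, mem_iUnion, mem_Ioc, true_iff]
    obtain ⟨n, hn⟩ := exists_nat_gt |x|
    obtain ⟨h1, h2⟩ := abs_lt.1 hn
    exact ⟨n, h1, h2.le⟩
  have hmono : Monotone fun n : ℕ => Ioc (-(n : ℝ)) n := by
    intro m n hmn
    apply Ioc_subset_Ioc <;> simp only [neg_le_neg_iff, Nat.cast_le] <;> exact_mod_cast hmn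
  have key : ∀ n : ℕ, ν (Ioc (-(n : ℝ)) n) ≤ ENNReal.ofReal η := by
    intro n
    rw [hν, withDensity_apply _ measurableSet_Ioc]
    have hInt : IntegrableOn (fun ξ : ℝ => F ξ - F (ξ - η)) (Ioc (-(n : ℝ)) n) := by
      apply Measure.integrableOn_of_bounded (M := 1) measure_Ioc_lt_top.ne
      · exact ((hFm.sub (hFm.comp (measurable_id.sub measurable_const))).aestronglyMeasurable)
      · filter_upwards with x
        have h1 := hF x
        have h2 := hF (x - η)
        have h3 : F (x - η) ≤ F x := hFmono (by linarith)
        rw [Real.norm_eq_abs, abs_of_nonneg (by linarith)]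
        simp only [mem_Icc] at h1 h2
        linarith [h1.2, h2.1]
    have hnn : 0 ≤ᵐ[volume.restrict (Ioc (-(n : ℝ)) n)] fun ξ : ℝ => F ξ - F (ξ - η) := by
      filter_upwards with x
      have : F (x - η) ≤ F x := hFmono (by linarith)
      simp only [Pi.zero_apply]
      linarith
    rw [← ofReal_integral_eq_lintegral_ofReal hInt hnn]
    apply ENNReal.ofReal_le_ofReal
    have hab : -(n : ℝ) ≤ n := le_trans (neg_nonpos.2 n.cast_nonneg) n.cast_nonneg
    have hint : ∀ u v : ℝ, IntervalIntegrable F volume u v := fun u v =>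
      hFmono.intervalIntegrable
    have hint' : ∀ u v : ℝ, IntervalIntegrable (fun ξ : ℝ => F (ξ - η)) volume u v :=
      fun u v => (Monotone.intervalIntegrable (fun a b h => hFmono (sub_le_sub_right h η)))
    rw [← intervalIntegral.integral_of_le hab]
    rw [intervalIntegral.integral_sub (hint _ _) (hint' _ _)]
    rw [intervalIntegral.integral_comp_sub_right F η]
    set a : ℝ := -(n : ℝ)
    set b : ℝ := (n : ℝ)
    have h1 : (∫ x in (a - η)..a, F x) + ∫ x in a..b, F x = ∫ x in (a - η)..b, F x :=
      intervalIntegral.integral_add_adjacent_intervals (hint _ _) (hint _ _)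
    have h2 : (∫ x in (a - η)..(b - η), F x) + ∫ x in (b - η)..b, F x
        = ∫ x in (a - η)..b, F x :=
      intervalIntegral.integral_add_adjacent_intervals (hint _ _) (hint _ _)
    have h3 : (0 : ℝ) ≤ ∫ x in (a - η)..a, F x :=
      intervalIntegral.integral_nonneg (by linarith) (fun x _ => (hF x).1)
    have h4 : (∫ x in (b - η)..b, F x) ≤ η := by
      calc (∫ x in (b - η)..b, F x) ≤ ∫ x in (b - η)..b, (1 : ℝ) := by
            apply intervalIntegral.integral_mono_on (by linarith) (hint _ _)
              intervalIntegrable_const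
            exact fun x _ => (hF x).2
        _ = η := by simp
    linarith
  calc ∫⁻ ξ : ℝ, ENNReal.ofReal (F ξ - F (ξ - η))
      = ν univ := by rw [hν, withDensity_apply _ MeasurableSet.univ, Measure.restrict_univ]
    _ = ⨆ n : ℕ, ν (Ioc (-(n : ℝ)) n) := by
        rw [huniv]
        exact (hmono.directed_le).measure_iUnion
    _ ≤ ENNReal.ofReal η := iSup_le key

/-- **Mollification error for monotone distribution functions** (estimates (4.14),
(4.15)): let `ψ ≥ 0` be symmetric with `∫ψ = 1` and support in `(-1,1)`, and
`ψ_δ(ξ) = δ⁻¹ψ(ξ/δ)`.  If `g : ℝ → [0,1]` is measurable and `F : ℝ → [0,1]` is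
nondecreasing with `F(-∞) = 0`, `F(+∞) = 1`, then
`|∫ g(ξ) (F(ξ) - (ψ_δ * F)(ξ)) dξ| ≤ δ`. -/
theorem mollified_cdf_error_bound
    (ψ : ℝ → ℝ) (hψmeas : Measurable ψ) (hψnonneg : ∀ x, 0 ≤ ψ x)
    (hψsymm : ∀ x, ψ (-x) = ψ x) (hψint : (∫ x, ψ x) = 1)
    (hψsupp : Function.support ψ ⊆ Ioo (-1 : ℝ) 1)
    (δ : ℝ) (hδ : 0 < δ)
    (g : ℝ → ℝ) (hgmeas : Measurable g) (hg : ∀ ξ, g ξ ∈ Icc (0 : ℝ) 1)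
    (F : ℝ → ℝ) (hFmono : Monotone F) (hF : ∀ ξ, F ξ ∈ Icc (0 : ℝ) 1)
    (hFbot : Tendsto F atBot (𝓝 0)) (hFtop : Tendsto F atTop (𝓝 1)) :
    |∫ ξ : ℝ, g ξ * (F ξ - ∫ ζ : ℝ, δ⁻¹ * ψ ((ξ - ζ) / δ) * F ζ)| ≤ δ := by
  have hFm : Measurable F := hFmono.measurable
  set k : ℝ → ℝ := fun t => δ⁻¹ * ψ (t / δ) with hk
  have hkmeas : Measurable k := (hψmeas.comp (measurable_id.div_const δ)).const_mul δ⁻¹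
  have hknn : ∀ t, 0 ≤ k t := fun t => mul_nonneg (by positivity) (hψnonneg _)
  have hksupp : ∀ t, k t ≠ 0 → |t| < δ := by
    intro t ht
    have hψne : ψ (t / δ) ≠ 0 := by
      intro h; apply ht; simp [hk, h]
    have := hψsupp hψne
    rw [mem_Ioo] at this
    obtain ⟨h1, h2⟩ := this
    rw [abs_lt]
    constructor
    · nlinarith [mul_lt_mul_of_pos_right h1 hδ, div_mul_cancel₀ t hδ.ne']
    · nlinarith [mul_lt_mul_of_pos_right h2 hδ, div_mul_cancel₀ t hδ.ne']
  have hψInt : Integrable ψ := by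
    by_contra h
    rw [integral_undef h] at hψint
    norm_num at hψint
  have hkInt : Integrable k := (hψInt.comp_div hδ.ne').const_mul δ⁻¹
  have hkint1 : (∫ t, k t) = 1 := by
    rw [hk]
    rw [integral_const_mul]
    rw [Measure.integral_comp_div ψ δ]
    rw [hψint, abs_of_pos hδ]
    field_simp
    simp
  have hklint : (∫⁻ t, ENNReal.ofReal (k t)) = 1 := by
    rw [← ofReal_integral_eq_lintegral_ofReal hkInt (Filter.Eventually.of_forall fun t => hknn t),
      hkint1, ENNReal.ofReal_one]
  -- normalization for each ξ
  have hnorm : ∀ ξ : ℝ, (∫ ζ : ℝ, k (ξ - ζ)) = 1 := by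
    intro ξ
    rw [integral_sub_left_eq_self k volume ξ, hkint1]
  have hkξInt : ∀ ξ : ℝ, Integrable (fun ζ : ℝ => k (ξ - ζ)) := fun ξ => by
    simpa [Function.comp] using hkInt.comp_sub_left ξ
  have hkFInt : ∀ ξ : ℝ, Integrable (fun ζ : ℝ => k (ξ - ζ) * F ζ) := by
    intro ξ
    have hm1 : AEStronglyMeasurable (fun ζ : ℝ => k (ξ - ζ) * F ζ) volume :=
      ((hkmeas.comp (measurable_const.sub measurable_id)).mul hFm).aestronglyMeasurable
    apply (hkξInt ξ).mono hm1
    filter_upwards with ζ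
    simp only [Real.norm_eq_abs, abs_mul]
    rw [abs_of_nonneg (hknn _), abs_of_nonneg (hF ζ).1]
    nlinarith [(hF ζ).2, hknn (ξ - ζ)]
  have hconv : ∀ ξ : ℝ, F ξ - (∫ ζ : ℝ, k (ξ - ζ) * F ζ)
      = ∫ ζ : ℝ, k (ξ - ζ) * (F ξ - F ζ) := by
    intro ξ
    have : (fun ζ : ℝ => k (ξ - ζ) * (F ξ - F ζ))
        = fun ζ : ℝ => k (ξ - ζ) * F ξ - k (ξ - ζ) * F ζ := by
      funext ζ; ring
    rw [this, integral_sub ((hkξInt ξ).mul_const (F ξ)) (hkFInt ξ),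
      integral_mul_const, hnorm ξ, one_mul]
  -- pointwise bound on the convolution error
  have hptInt : ∀ ξ : ℝ, Integrable (fun ζ : ℝ => k (ξ - ζ) * |F ξ - F ζ|) := by
    intro ξ
    have hm2 : AEStronglyMeasurable (fun ζ : ℝ => k (ξ - ζ) * |F ξ - F ζ|) volume :=
      ((hkmeas.comp (measurable_const.sub measurable_id)).mul
        ((measurable_const.sub hFm).abs)).aestronglyMeasurable
    apply (hkξInt ξ).mono hm2
    filter_upwards with ζ
    simp only [Real.norm_eq_abs, abs_mul, abs_abs]
    rw [abs_of_nonneg (hknn _)]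
    have h1 := (hF ξ).1; have h2 := (hF ξ).2
    have h3 := (hF ζ).1; have h4 := (hF ζ).2
    have : |F ξ - F ζ| ≤ 1 := by rw [abs_le]; constructor <;> linarith
    nlinarith [hknn (ξ - ζ)]
  have hpt : ∀ ξ : ℝ, |F ξ - ∫ ζ : ℝ, k (ξ - ζ) * F ζ|
      ≤ ∫ ζ : ℝ, k (ξ - ζ) * |F ξ - F ζ| := by
    intro ξ
    rw [hconv ξ]
    calc |∫ ζ : ℝ, k (ξ - ζ) * (F ξ - F ζ)| ≤ ∫ ζ : ℝ, |k (ξ - ζ)| * |F ξ - F ζ| := by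
          simpa [Real.norm_eq_abs, abs_mul] using
            norm_integral_le_integral_norm (μ := volume) (fun ζ : ℝ => k (ξ - ζ) * (F ξ - F ζ))
      _ = ∫ ζ : ℝ, k (ξ - ζ) * |F ξ - F ζ| := by
          congr 1; funext ζ; rw [abs_of_nonneg (hknn _)]
  -- the shifted-integral bound for all η (both signs)
  have hshift : ∀ η : ℝ, (∫⁻ ξ : ℝ, ENNReal.ofReal |F ξ - F (ξ - η)|)
      ≤ ENNReal.ofReal |η| := by
    intro η
    rcases le_or_gt 0 η with hη | hη
    · rw [abs_of_nonneg hη]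
      calc (∫⁻ ξ : ℝ, ENNReal.ofReal |F ξ - F (ξ - η)|)
          = ∫⁻ ξ : ℝ, ENNReal.ofReal (F ξ - F (ξ - η)) := by
            apply lintegral_congr; intro ξ
            rw [abs_of_nonneg (sub_nonneg.2 (hFmono (by linarith)))]
        _ ≤ ENNReal.ofReal η := cdf_shift_lintegral_le F hFmono hF η hη
    · rw [abs_of_neg hη]
      set τ : ℝ := -η with hτ
      have hτpos : 0 ≤ τ := by simp [hτ]; linarith
      calc (∫⁻ ξ : ℝ, ENNReal.ofReal |F ξ - F (ξ - η)|)
          = ∫⁻ ξ : ℝ, ENNReal.ofReal (F (ξ + τ) - F ξ) := by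
            apply lintegral_congr; intro ξ
            have h1 : ξ - η = ξ + τ := by rw [hτ]; ring
            rw [h1, abs_of_nonpos (sub_nonpos.2 (hFmono (by linarith)))]
            congr 1; ring
        _ = ∫⁻ ξ : ℝ, ENNReal.ofReal (F ξ - F (ξ - τ)) := by
            have hmp : MeasurePreserving (fun ξ : ℝ => ξ + τ) volume volume :=
              measurePreserving_add_right volume τ
            have hmf : Measurable fun x : ℝ => ENNReal.ofReal (F x - F (x - τ)) :=
              (hFm.sub (hFm.comp (measurable_id.sub measurable_const))).ennreal_ofReal
            have := hmp.lintegral_comp hmf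
            simp only [add_sub_cancel_right] at this
            exact this
        _ ≤ ENNReal.ofReal τ := cdf_shift_lintegral_le F hFmono hF τ hτpos
  -- main chain in ℝ≥0∞
  have hGmeas : Measurable fun p : ℝ × ℝ =>
      ENNReal.ofReal (k p.2) * ENNReal.ofReal |F p.1 - F (p.1 - p.2)| :=
    ((hkmeas.comp measurable_snd).ennreal_ofReal).mul
      (((hFm.comp measurable_fst).sub (hFm.comp (measurable_fst.sub measurable_snd))).abs.ennreal_ofReal)
  have main : (∫⁻ ξ : ℝ, ENNReal.ofReal |g ξ * (F ξ - ∫ ζ : ℝ, k (ξ - ζ) * F ζ)|)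
      ≤ ENNReal.ofReal δ := by
    calc (∫⁻ ξ : ℝ, ENNReal.ofReal |g ξ * (F ξ - ∫ ζ : ℝ, k (ξ - ζ) * F ζ)|)
        ≤ ∫⁻ ξ : ℝ, ENNReal.ofReal |F ξ - ∫ ζ : ℝ, k (ξ - ζ) * F ζ| := by
          apply lintegral_mono; intro ξ
          apply ENNReal.ofReal_le_ofReal
          rw [abs_mul]
          have h1 := (hg ξ).1; have h2 := (hg ξ).2
          nlinarith [abs_nonneg (F ξ - ∫ ζ : ℝ, k (ξ - ζ) * F ζ), abs_of_nonneg h1]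
      _ ≤ ∫⁻ ξ : ℝ, ∫⁻ η : ℝ, ENNReal.ofReal (k η) * ENNReal.ofReal |F ξ - F (ξ - η)| := by
          apply lintegral_mono; intro ξ
          calc ENNReal.ofReal |F ξ - ∫ ζ : ℝ, k (ξ - ζ) * F ζ|
              ≤ ENNReal.ofReal (∫ ζ : ℝ, k (ξ - ζ) * |F ξ - F ζ|) :=
                ENNReal.ofReal_le_ofReal (hpt ξ)
            _ = ∫⁻ ζ : ℝ, ENNReal.ofReal (k (ξ - ζ) * |F ξ - F ζ|) :=
                ofReal_integral_eq_lintegral_ofReal (hptInt ξ)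
                  (Filter.Eventually.of_forall fun ζ =>
                    mul_nonneg (hknn _) (abs_nonneg _))
            _ = ∫⁻ η : ℝ, ENNReal.ofReal (k η) * ENNReal.ofReal |F ξ - F (ξ - η)| := by
                have hmp : MeasurePreserving (fun ζ : ℝ => ξ - ζ) volume volume :=
                  Measure.measurePreserving_sub_left volume ξ
                have hmf : Measurable fun η : ℝ =>
                    ENNReal.ofReal (k η) * ENNReal.ofReal |F ξ - F (ξ - η)| :=
                  (hkmeas.ennreal_ofReal).mul
                    ((measurable_const.sub
                      (hFm.comp (measurable_const.sub measurable_id))).abs.ennreal_ofReal)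
                have := hmp.lintegral_comp hmf
                rw [← this]
                apply lintegral_congr; intro ζ
                have hζ : ξ - (ξ - ζ) = ζ := by ring
                rw [hζ, ENNReal.ofReal_mul (hknn _)]
      _ = ∫⁻ η : ℝ, ∫⁻ ξ : ℝ, ENNReal.ofReal (k η) * ENNReal.ofReal |F ξ - F (ξ - η)| :=
          lintegral_lintegral_swap hGmeas.aemeasurable
      _ ≤ ∫⁻ η : ℝ, ENNReal.ofReal (k η) * ENNReal.ofReal δ := by
          apply lintegral_mono; intro η
          dsimp only
          have hmf : Measurable fun ξ : ℝ => ENNReal.ofReal |F ξ - F (ξ - η)| :=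
            ((hFm.sub (hFm.comp (measurable_id.sub measurable_const)))).abs.ennreal_ofReal
          rw [lintegral_const_mul _ hmf]
          by_cases hkη : k η = 0
          · simp [hkη]
          · apply mul_le_mul_right _ _
            calc (∫⁻ ξ : ℝ, ENNReal.ofReal |F ξ - F (ξ - η)|) ≤ ENNReal.ofReal |η| :=
                hshift η
              _ ≤ ENNReal.ofReal δ := ENNReal.ofReal_le_ofReal (hksupp η hkη).le
      _ = ENNReal.ofReal δ := by
          rw [lintegral_mul_const _ hkmeas.ennreal_ofReal, hklint, one_mul]
  -- conclude
  calc |∫ ξ : ℝ, g ξ * (F ξ - ∫ ζ : ℝ, δ⁻¹ * ψ ((ξ - ζ) / δ) * F ζ)|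
      ≤ (∫⁻ ξ : ℝ, ENNReal.ofReal ‖g ξ * (F ξ - ∫ ζ : ℝ, δ⁻¹ * ψ ((ξ - ζ) / δ) * F ζ)‖).toReal := by
        simpa [Real.norm_eq_abs] using
          norm_integral_le_lintegral_norm
            (fun ξ : ℝ => g ξ * (F ξ - ∫ ζ : ℝ, δ⁻¹ * ψ ((ξ - ζ) / δ) * F ζ))
    _ ≤ δ := by
        apply ENNReal.toReal_le_of_le_ofReal hδ.le
        calc (∫⁻ ξ : ℝ, ENNReal.ofReal ‖g ξ * (F ξ - ∫ ζ : ℝ, δ⁻¹ * ψ ((ξ - ζ) / δ) * F ζ)‖)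
            = ∫⁻ ξ : ℝ, ENNReal.ofReal |g ξ * (F ξ - ∫ ζ : ℝ, k (ξ - ζ) * F ζ)| := by
              simp only [Real.norm_eq_abs]
              rfl
          _ ≤ ENNReal.ofReal δ := main
end
end

section
/- Let U and H be separable Hilbert spaces, (e_k) an orthonormal basis of U, and let σ_k : [0,T] → H, k ∈ ℕ, be measurable with Σ_k ‖σ_k(s)‖²_H ≤ C² for almost every s ∈ [0,T]. Let (h_n) ⊂ L²([0,T];U) with sup_n ∫₀^T |h_n(s)|²_U ds ≤ M and h_n → h weakly in L²([0,T];U), and let (v_n) ⊂ L²([0,T];H) with v_n → v strongly in L²([0,T];H). Then sup_{t∈[0,T]} | ∫₀^t Σ_k ⟨σ_k(s), v_n(s)⟩_H · ⟨h_n(s) − h(s), e_k⟩_U ds | → 0 as n → ∞. -/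
open MeasureTheory Set Filter
open scoped ENNReal Topology RealInnerProductSpace

noncomputable section

namespace CDPC

variable {α : Type} {E : Type} [NormedAddCommGroup E] [InnerProductSpace ℝ E]
  {m0 : MeasurableSpace α} {μ : Measure α}

set_option linter.unusedSectionVars false

/-- L² norm of `toLp` as a square-root of an integral. -/
lemma norm_toLp_eq_sqrt {f : α → E} (hf : MemLp f 2 μ) :
    ‖hf.toLp f‖ = Real.sqrt (∫ s, ‖f s‖ ^ 2 ∂μ) := by
  have h1 : (⟪hf.toLp f, hf.toLp f⟫ : ℝ) = ∫ s, ‖f s‖ ^ 2 ∂μ := by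
    rw [L2.inner_def]
    refine integral_congr_ae ?_
    filter_upwards [hf.coeFn_toLp] with s hs
    rw [hs, real_inner_self_eq_norm_sq]
  rw [← h1, real_inner_self_eq_norm_sq, Real.sqrt_sq (norm_nonneg _)]

/-- Integrability of the pointwise inner product of two L² functions. -/
lemma integrable_inner_of_memLp {f g : α → E} (hf : MemLp f 2 μ) (hg : MemLp g 2 μ) :
    Integrable (fun s => (⟪f s, g s⟫ : ℝ)) μ := by
  refine (L2.integrable_inner (𝕜 := ℝ) (hf.toLp f) (hg.toLp g)).congr ?_
  filter_upwards [hf.coeFn_toLp, hg.coeFn_toLp] with s h1 h2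
  rw [h1, h2]

/-- Cauchy–Schwarz for integrals of inner products of L² functions. -/
lemma abs_integral_inner_le {f g : α → E} (hf : MemLp f 2 μ) (hg : MemLp g 2 μ) :
    |∫ s, (⟪f s, g s⟫ : ℝ) ∂μ| ≤
      Real.sqrt (∫ s, ‖f s‖ ^ 2 ∂μ) * Real.sqrt (∫ s, ‖g s‖ ^ 2 ∂μ) := by
  have h1 : (∫ s, (⟪f s, g s⟫ : ℝ) ∂μ) = ⟪hf.toLp f, hg.toLp g⟫ := by
    rw [L2.inner_def]
    refine integral_congr_ae ?_
    filter_upwards [hf.coeFn_toLp, hg.coeFn_toLp] with s h1 h2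
    rw [h1, h2]
  rw [h1, ← norm_toLp_eq_sqrt hf, ← norm_toLp_eq_sqrt hg]
  exact abs_real_inner_le_norm _ _

/-- `MemLp f 2` from a bound on the lintegral of the squared norm. -/
lemma memLp_two_of_lintegral {f : α → E} (hf : AEStronglyMeasurable f μ)
    (h : (∫⁻ s, ENNReal.ofReal (‖f s‖ ^ 2) ∂μ) ≠ ∞) : MemLp f 2 μ := by
  rw [memLp_two_iff_integrable_sq_norm hf]
  refine ⟨(hf.norm.aemeasurable.pow_const 2).aestronglyMeasurable, ?_⟩
  rw [hasFiniteIntegral_iff_norm]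
  have heq : ∀ s, ENNReal.ofReal ‖‖f s‖ ^ 2‖ = ENNReal.ofReal (‖f s‖ ^ 2) := by
    intro s; rw [Real.norm_of_nonneg (sq_nonneg _)]
  simpa [heq] using h.lt_top

/-- real integral of squared norm equals toReal of the lintegral. -/
lemma integral_sq_eq_toReal {f : α → E} (hf : AEStronglyMeasurable f μ) :
    (∫ s, ‖f s‖ ^ 2 ∂μ) = (∫⁻ s, ENNReal.ofReal (‖f s‖ ^ 2) ∂μ).toReal :=
  integral_eq_lintegral_of_nonneg_ae (Eventually.of_forall fun _ => sq_nonneg _)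
    (hf.norm.aemeasurable.pow_const 2).aestronglyMeasurable

lemma norm_le_of_sq_le {E' : Type*} [NormedAddCommGroup E'] {x : E'} {C r : ℝ} (hr : 0 ≤ r)
    (h : ‖x‖ ^ 2 ≤ C ^ 2 * r ^ 2) : ‖x‖ ≤ |C| * r := by
  have h1 := Real.sqrt_le_sqrt h
  rw [Real.sqrt_sq (norm_nonneg _)] at h1
  refine h1.trans (le_of_eq ?_)
  rw [Real.sqrt_mul (sq_nonneg C), Real.sqrt_sq_eq_abs, Real.sqrt_sq hr]

/-- Pointwise facts about `Φ = Σ_k ⟨σ_k, w⟩ e_k` when `Σ ‖σ_k‖² ≤ C²`. -/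
lemma phi_aux {U H : Type}
    [NormedAddCommGroup U] [InnerProductSpace ℝ U] [CompleteSpace U]
    [NormedAddCommGroup H] [InnerProductSpace ℝ H]
    (e : HilbertBasis ℕ ℝ U) (σs : ℕ → H) (C : ℝ)
    (hsum : Summable (fun k => ‖σs k‖ ^ 2)) (hbd : (∑' k, ‖σs k‖ ^ 2) ≤ C ^ 2) (w : H) :
    HasSum (fun k => (⟪σs k, w⟫ : ℝ) • e k) (∑' k, (⟪σs k, w⟫ : ℝ) • e k) ∧
    ‖∑' k, (⟪σs k, w⟫ : ℝ) • e k‖ ^ 2 ≤ C ^ 2 * ‖w‖ ^ 2 ∧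
    ∀ u : U, HasSum (fun k => (⟪σs k, w⟫ : ℝ) * ⟪u, e k⟫)
      (⟪u, ∑' k, (⟪σs k, w⟫ : ℝ) • e k⟫ : ℝ) := by
  set c : ℕ → ℝ := fun k => (⟪σs k, w⟫ : ℝ) with hc
  have hc2 : Summable (fun k => ‖c k‖ ^ 2) := by
    refine Summable.of_nonneg_of_le (fun k => sq_nonneg _) (fun k => ?_) (hsum.mul_right (‖w‖ ^ 2))
    have h1 : ‖c k‖ ≤ ‖σs k‖ * ‖w‖ := by
      simpa [hc] using abs_real_inner_le_norm (σs k) w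
    calc ‖c k‖ ^ 2 ≤ (‖σs k‖ * ‖w‖) ^ 2 := pow_le_pow_left₀ (norm_nonneg _) h1 2
      _ = ‖σs k‖ ^ 2 * ‖w‖ ^ 2 := by ring
  have hmem : Memℓp c 2 := by
    refine memℓp_gen ?_
    have h2 : ((2 : ℝ≥0∞).toReal) = (2 : ℝ) := by norm_num
    rw [h2]
    simpa [Real.rpow_natCast] using hc2
  set f : lp (fun _ : ℕ => ℝ) 2 := ⟨c, hmem⟩ with hf
  have hfapp : ∀ k, f k = c k := fun k => rfl
  set x : U := e.repr.symm f with hx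
  have hxsum : HasSum (fun k => c k • e k) x := by
    simpa [hfapp] using e.hasSum_repr_symm f
  have htsum : (∑' k, c k • e k) = x := hxsum.tsum_eq
  have hnorm : ‖x‖ ^ 2 ≤ C ^ 2 * ‖w‖ ^ 2 := by
    have h1 : ‖x‖ = ‖f‖ := by rw [hx]; exact e.repr.symm.norm_map f
    have h2 : ‖f‖ ^ ((2 : ℝ≥0∞).toReal) = ∑' k, ‖f k‖ ^ ((2 : ℝ≥0∞).toReal) :=
      lp.norm_rpow_eq_tsum (by norm_num) f
    have h2' : ‖f‖ ^ (2 : ℕ) = ∑' k, ‖c k‖ ^ (2 : ℕ) := by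
      have he : ((2 : ℝ≥0∞).toReal) = (2 : ℝ) := by norm_num
      rw [he] at h2
      simpa [Real.rpow_natCast, hfapp] using h2
    have h3 : (∑' k, ‖c k‖ ^ 2) ≤ C ^ 2 * ‖w‖ ^ 2 := by
      have hle : (∑' k, ‖c k‖ ^ 2) ≤ ∑' k, ‖σs k‖ ^ 2 * ‖w‖ ^ 2 := by
        refine Summable.tsum_le_tsum (fun k => ?_) hc2 (hsum.mul_right _)
        have h1' : ‖c k‖ ≤ ‖σs k‖ * ‖w‖ := by
          simpa [hc] using abs_real_inner_le_norm (σs k) w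
        calc ‖c k‖ ^ 2 ≤ (‖σs k‖ * ‖w‖) ^ 2 := pow_le_pow_left₀ (norm_nonneg _) h1' 2
          _ = ‖σs k‖ ^ 2 * ‖w‖ ^ 2 := by ring
      refine hle.trans ?_
      rw [tsum_mul_right]
      exact mul_le_mul_of_nonneg_right hbd (sq_nonneg _)
    rw [h1, h2']
    exact h3
  refine ⟨by rw [htsum]; exact hxsum, by rw [htsum]; exact hnorm, fun u => ?_⟩
  rw [htsum]
  have h4 := hxsum.mapL (innerSL ℝ u)
  simpa [innerSL_apply_apply, real_inner_smul_right] using h4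

end CDPC

open CDPC

set_option maxHeartbeats 1000000 in
/-- **Convergence of the control–drift pairing** (the key convergence (4.23)–(4.26) in
Theorem 4.11, abstracted): let `U, H` be separable Hilbert spaces, `(e_k)` an orthonormal
basis of `U`, and `σ_k : [0,T] → H` measurable with `Σ_k ‖σ_k(s)‖² ≤ C²` a.e.  If
`h_n → h` weakly in `L²([0,T];U)` with `∫₀^T |h_n|² ≤ M`, and `v_n → v` strongly in
`L²([0,T];H)`, then
`sup_{t∈[0,T]} |∫₀^t Σ_k ⟪σ_k(s), v_n(s)⟫_H ⟪h_n(s)-h(s), e_k⟫_U ds| → 0`. -/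
theorem control_drift_pairing_convergence
    {U H : Type}
    [NormedAddCommGroup U] [InnerProductSpace ℝ U] [TopologicalSpace.SeparableSpace U] [CompleteSpace U]
    [NormedAddCommGroup H] [InnerProductSpace ℝ H] [TopologicalSpace.SeparableSpace H] [CompleteSpace H]
    (e : HilbertBasis ℕ ℝ U)
    (T : ℝ) (hT : 0 < T) (C M : ℝ)
    (σ : ℕ → ℝ → H) (hσmeas : ∀ k, StronglyMeasurable (σ k))
    (hσbdd : ∀ᵐ s ∂(volume.restrict (Ioc (0 : ℝ) T)),
      (∑' k : ℕ, ENNReal.ofReal (‖σ k s‖ ^ 2)) ≤ ENNReal.ofReal (C ^ 2))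
    (hn : ℕ → ℝ → U) (h : ℝ → U)
    (hhnmeas : ∀ n, AEStronglyMeasurable (hn n) (volume.restrict (Ioc (0 : ℝ) T)))
    (hhmeas : AEStronglyMeasurable h (volume.restrict (Ioc (0 : ℝ) T)))
    (hhnbdd : ∀ n, (∫⁻ s in Ioc (0 : ℝ) T, ENNReal.ofReal (‖hn n s‖ ^ 2)) ≤ ENNReal.ofReal M)
    -- `h_n → h` weakly in `L²([0,T];U)`
    (hweak : ∀ g : ℝ → U, MemLp g 2 (volume.restrict (Ioc (0 : ℝ) T)) →
      Tendsto (fun n => ∫ s in Ioc (0 : ℝ) T, ⟪hn n s, g s⟫) atTop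
        (𝓝 (∫ s in Ioc (0 : ℝ) T, ⟪h s, g s⟫)))
    (vn : ℕ → ℝ → H) (v : ℝ → H)
    (hvn : ∀ n, MemLp (vn n) 2 (volume.restrict (Ioc (0 : ℝ) T)))
    (hv : MemLp v 2 (volume.restrict (Ioc (0 : ℝ) T)))
    -- `v_n → v` strongly in `L²([0,T];H)`
    (hstrong : Tendsto (fun n => ∫⁻ s in Ioc (0 : ℝ) T, ENNReal.ofReal (‖vn n s - v s‖ ^ 2))
      atTop (𝓝 0)) :
    ∀ δ > (0 : ℝ), ∃ N₀ : ℕ, ∀ n ≥ N₀, ∀ t ∈ Icc (0 : ℝ) T,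
      |∫ s in Ioc (0 : ℝ) t, ∑' k : ℕ, ⟪σ k s, vn n s⟫ * ⟪hn n s - h s, e k⟫| ≤ δ := by
  classical
  intro δ hδ
  set μT := volume.restrict (Ioc (0 : ℝ) T) with hμT
  haveI : IsFiniteMeasure μT := by
    constructor
    rw [hμT, Measure.restrict_apply_univ, Real.volume_Ioc]
    exact ENNReal.ofReal_lt_top
  -- the good set
  have hgood : ∀ᵐ s ∂μT, Summable (fun k => ‖σ k s‖ ^ 2) ∧ (∑' k, ‖σ k s‖ ^ 2) ≤ C ^ 2 := by
    filter_upwards [hσbdd] with s hs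
    have hne : (∑' k, ENNReal.ofReal (‖σ k s‖ ^ 2)) ≠ ∞ := (hs.trans_lt ENNReal.ofReal_lt_top).ne
    have hsumm : Summable (fun k => ‖σ k s‖ ^ 2) := by
      refine (ENNReal.summable_toReal hne).congr fun k => ?_
      rw [ENNReal.toReal_ofReal (sq_nonneg _)]
    refine ⟨hsumm, ?_⟩
    have h1 : (∑' k, ‖σ k s‖ ^ 2) = (∑' k, ENNReal.ofReal (‖σ k s‖ ^ 2)).toReal := by
      rw [ENNReal.tsum_toReal_eq (fun k => ENNReal.ofReal_ne_top)]
      exact tsum_congr fun k => (ENNReal.toReal_ofReal (sq_nonneg _)).symm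
    rw [h1]
    calc (∑' k, ENNReal.ofReal (‖σ k s‖ ^ 2)).toReal
        ≤ (ENNReal.ofReal (C ^ 2)).toReal := ENNReal.toReal_mono ENNReal.ofReal_ne_top hs
      _ = C ^ 2 := ENNReal.toReal_ofReal (sq_nonneg _)
  -- hn are in L²
  have hhnL2 : ∀ n, MemLp (hn n) 2 μT := fun n =>
    memLp_two_of_lintegral (hhnmeas n) ((hhnbdd n).trans_lt ENNReal.ofReal_lt_top).ne
  set M' : ℝ := max M 0 with hM'
  have hM'nn : 0 ≤ M' := le_max_right M 0
  have hMn : ∀ n, (∫ s, ‖hn n s‖ ^ 2 ∂μT) ≤ M' := by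
    intro n
    rw [integral_sq_eq_toReal (hhnmeas n)]
    have h1 : (∫⁻ s, ENNReal.ofReal (‖hn n s‖ ^ 2) ∂μT) ≤ ENNReal.ofReal M' :=
      (hhnbdd n).trans (ENNReal.ofReal_le_ofReal (le_max_left M 0))
    calc (∫⁻ s, ENNReal.ofReal (‖hn n s‖ ^ 2) ∂μT).toReal
        ≤ (ENNReal.ofReal M').toReal := ENNReal.toReal_mono ENNReal.ofReal_ne_top h1
      _ = M' := ENNReal.toReal_ofReal hM'nn
  -- h is in L²  (via weak convergence and truncation)
  have hhL2 : MemLp h 2 μT := by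
    set h' := hhmeas.mk h with hh'
    have hh'sm : StronglyMeasurable h' := hhmeas.stronglyMeasurable_mk
    have hhae : h =ᵐ[μT] h' := hhmeas.ae_eq_mk
    have hSmeas : ∀ R : ℕ, MeasurableSet {s : ℝ | ‖h' s‖ ≤ (R : ℝ)} := fun R =>
      measurableSet_le hh'sm.norm.measurable measurable_const
    set g : ℕ → ℝ → U := fun R => ({s : ℝ | ‖h' s‖ ≤ (R : ℝ)}).indicator h' with hg
    have hgL2 : ∀ R, MemLp (g R) 2 μT := by
      intro R
      refine MemLp.of_bound ((hh'sm.indicator (hSmeas R)).aestronglyMeasurable) (R : ℝ) ?_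
      refine Eventually.of_forall fun s => ?_
      by_cases hs : s ∈ {s : ℝ | ‖h' s‖ ≤ (R : ℝ)}
      · rw [hg]; simp only [indicator_of_mem hs]; exact hs
      · rw [hg]; simp only [indicator_of_notMem hs, norm_zero]; positivity
    have hqint : ∀ R : ℕ,
        Integrable (({s : ℝ | ‖h' s‖ ≤ (R : ℝ)}).indicator (fun s => ‖h' s‖ ^ 2)) μT := by
      intro R
      refine memLp_one_iff_integrable.mp ?_
      refine MemLp.of_bound (((hh'sm.norm.pow 2)).indicator (hSmeas R)).aestronglyMeasurable
        ((R : ℝ) ^ 2) ?_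
      refine Eventually.of_forall fun s => ?_
      by_cases hs : s ∈ {s : ℝ | ‖h' s‖ ≤ (R : ℝ)}
      · rw [indicator_of_mem hs, Real.norm_of_nonneg (sq_nonneg _)]
        exact pow_le_pow_left₀ (norm_nonneg _) hs 2
      · rw [indicator_of_notMem hs, norm_zero]; positivity
    have hLle : ∀ R : ℕ,
        (∫ s, ({s : ℝ | ‖h' s‖ ≤ (R : ℝ)}).indicator (fun s => ‖h' s‖ ^ 2) s ∂μT) ≤ M' := by
      intro R
      set L := ∫ s, ({s : ℝ | ‖h' s‖ ≤ (R : ℝ)}).indicator (fun s => ‖h' s‖ ^ 2) s ∂μT with hL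
      have hLnn : 0 ≤ L :=
        integral_nonneg fun s => indicator_nonneg (fun s _ => sq_nonneg _) s
      have hwg := hweak (g R) (hgL2 R)
      have hLeq : (∫ s, (⟪h s, g R s⟫ : ℝ) ∂μT) = L := by
        rw [hL]
        refine integral_congr_ae ?_
        filter_upwards [hhae] with s hs
        rw [hs]
        by_cases hmem : s ∈ {s : ℝ | ‖h' s‖ ≤ (R : ℝ)}
        · rw [hg]; simp only [indicator_of_mem hmem]; rw [real_inner_self_eq_norm_sq]
        · rw [hg]; simp only [indicator_of_notMem hmem, inner_zero_right]
      have hbound : ∀ n, |∫ s, (⟪hn n s, g R s⟫ : ℝ) ∂μT| ≤ Real.sqrt M' * Real.sqrt L := by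
        intro n
        refine (abs_integral_inner_le (hhnL2 n) (hgL2 R)).trans ?_
        refine mul_le_mul (Real.sqrt_le_sqrt (hMn n)) (Real.sqrt_le_sqrt ?_)
          (Real.sqrt_nonneg _) (Real.sqrt_nonneg _)
        rw [hL]
        refine le_of_eq (integral_congr_ae (Eventually.of_forall fun s => ?_))
        by_cases hmem : s ∈ {s : ℝ | ‖h' s‖ ≤ (R : ℝ)}
        · rw [hg]; simp only [indicator_of_mem hmem]
        · rw [hg]; simp only [indicator_of_notMem hmem, norm_zero]; norm_num
      have hlim : |L| ≤ Real.sqrt M' * Real.sqrt L := by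
        rw [← hLeq] at *
        exact le_of_tendsto' hwg.abs hbound
      rw [abs_of_nonneg hLnn] at hlim
      nlinarith [Real.sqrt_nonneg L, Real.sqrt_nonneg M', Real.sq_sqrt hLnn,
        Real.sq_sqrt hM'nn, sq_nonneg (Real.sqrt L - Real.sqrt M')]
    have hmono : (∫⁻ s, ENNReal.ofReal (‖h' s‖ ^ 2) ∂μT) ≤ ENNReal.ofReal M' := by
      set fR : ℕ → ℝ → ℝ≥0∞ :=
        fun R => ({s : ℝ | ‖h' s‖ ≤ (R : ℝ)}).indicator
          (fun s => ENNReal.ofReal (‖h' s‖ ^ 2)) with hfR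
      have hmeasR : ∀ R, Measurable (fR R) := fun R =>
        (ENNReal.measurable_ofReal.comp ((hh'sm.norm.measurable).pow_const 2)).indicator (hSmeas R)
      have hmonoR : Monotone fR := by
        intro R R' hRR' s
        by_cases hs : s ∈ {s : ℝ | ‖h' s‖ ≤ (R : ℝ)}
        · have hs' : s ∈ {s : ℝ | ‖h' s‖ ≤ (R' : ℝ)} := by
            simp only [mem_setOf_eq] at hs ⊢
            exact le_trans hs (Nat.cast_le.mpr hRR')
          rw [hfR]
          simp only [indicator_of_mem hs, indicator_of_mem hs']
          exact le_rfl
        · rw [hfR]; simp only [indicator_of_notMem hs]; exact zero_le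
      have hsup : ∀ s, (⨆ R, fR R s) = ENNReal.ofReal (‖h' s‖ ^ 2) := by
        intro s
        obtain ⟨R, hR⟩ := exists_nat_ge ‖h' s‖
        refine le_antisymm (iSup_le fun R' => ?_) ?_
        · by_cases hs : s ∈ {s : ℝ | ‖h' s‖ ≤ (R' : ℝ)}
          · rw [hfR]; simp only [indicator_of_mem hs]; exact le_rfl
          · rw [hfR]; simp only [indicator_of_notMem hs]; exact zero_le
        · refine le_iSup_of_le R ?_
          have hs : s ∈ {s : ℝ | ‖h' s‖ ≤ (R : ℝ)} := hR
          rw [hfR]; simp only [indicator_of_mem hs]; exact le_rfl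
      have hml := lintegral_iSup (μ := μT) hmeasR hmonoR
      have hLint : (∫⁻ s, ENNReal.ofReal (‖h' s‖ ^ 2) ∂μT) = ⨆ R, ∫⁻ s, fR R s ∂μT := by
        rw [← hml]
        exact lintegral_congr fun s => (hsup s).symm
      rw [hLint]
      refine iSup_le fun R => ?_
      have heq : (∫⁻ s, fR R s ∂μT) =
          ENNReal.ofReal (∫ s, ({s : ℝ | ‖h' s‖ ≤ (R : ℝ)}).indicator
            (fun s => ‖h' s‖ ^ 2) s ∂μT) := by
        rw [ofReal_integral_eq_lintegral_ofReal (hqint R)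
          (Eventually.of_forall fun s => indicator_nonneg (fun s _ => sq_nonneg _) s)]
        refine lintegral_congr fun s => ?_
        by_cases hs : s ∈ {s : ℝ | ‖h' s‖ ≤ (R : ℝ)}
        · rw [hfR]; simp only [indicator_of_mem hs]
        · rw [hfR]; simp only [indicator_of_notMem hs, ENNReal.ofReal_zero]
      rw [heq]
      exact ENNReal.ofReal_le_ofReal (hLle R)
    refine memLp_two_of_lintegral hhmeas ?_
    have heq2 : (∫⁻ s, ENNReal.ofReal (‖h s‖ ^ 2) ∂μT) =
        ∫⁻ s, ENNReal.ofReal (‖h' s‖ ^ 2) ∂μT := by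
      refine lintegral_congr_ae ?_
      filter_upwards [hhae] with s hs
      rw [hs]
    rw [heq2]
    exact (hmono.trans_lt ENNReal.ofReal_lt_top).ne
  -- global L² bound for hn n - h
  set Kh : ℝ := Real.sqrt (∫ s, ‖h s‖ ^ 2 ∂μT) with hKh
  set K : ℝ := Real.sqrt M' + Kh + 1 with hK
  have hKhnn : 0 ≤ Kh := Real.sqrt_nonneg _
  have hK1 : 1 ≤ K := by
    rw [hK]
    have := Real.sqrt_nonneg M'
    linarith
  have hKpos : 0 < K := lt_of_lt_of_le zero_lt_one hK1
  have huL2 : ∀ n, MemLp (fun s => hn n s - h s) 2 μT := fun n => (hhnL2 n).sub hhL2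
  have hKb : ∀ n, Real.sqrt (∫ s, ‖hn n s - h s‖ ^ 2 ∂μT) ≤ K := by
    intro n
    have h1 : Real.sqrt (∫ s, ‖hn n s - h s‖ ^ 2 ∂μT) = ‖(huL2 n).toLp _‖ :=
      (norm_toLp_eq_sqrt (huL2 n)).symm
    rw [h1]
    have h2 : (huL2 n).toLp (fun s => hn n s - h s) = (hhnL2 n).toLp (hn n) - hhL2.toLp h := by
      exact MemLp.toLp_sub (hhnL2 n) hhL2
    rw [h2]
    refine (norm_sub_le _ _).trans ?_
    rw [norm_toLp_eq_sqrt (hhnL2 n), norm_toLp_eq_sqrt hhL2]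
    have h3 : Real.sqrt (∫ s, ‖hn n s‖ ^ 2 ∂μT) ≤ Real.sqrt M' := Real.sqrt_le_sqrt (hMn n)
    rw [hK, ← hKh]
    linarith
  -- the Φ functions
  set Φ : ℝ → U := fun s => ∑' k, (⟪σ k s, v s⟫ : ℝ) • e k with hΦdef
  set Φn : ℕ → ℝ → U := fun n s => ∑' k, (⟪σ k s, vn n s⟫ : ℝ) • e k with hΦndef
  have hΦmeas_gen : ∀ (w : ℝ → H), AEStronglyMeasurable w μT →
      AEStronglyMeasurable (fun s => ∑' k, (⟪σ k s, w s⟫ : ℝ) • e k) μT := by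
    intro w hw
    refine aestronglyMeasurable_of_tendsto_ae atTop
      (f := fun m s => ∑ k ∈ Finset.range m, (⟪σ k s, w s⟫ : ℝ) • e k) (fun m => ?_) ?_
    · exact Finset.aestronglyMeasurable_fun_sum _ fun k _ =>
        ((hσmeas k).aestronglyMeasurable.inner hw).smul_const (e k)
    · filter_upwards [hgood] with s hs
      exact ((phi_aux e (fun k => σ k s) C hs.1 hs.2 (w s)).1).tendsto_sum_nat
  have hΦmeas : AEStronglyMeasurable Φ μT := hΦmeas_gen v hv.1
  have hΦnmeas : ∀ n, AEStronglyMeasurable (Φn n) μT := fun n => hΦmeas_gen (vn n) (hvn n).1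
  have hΦbd : ∀ᵐ s ∂μT, ‖Φ s‖ ≤ |C| * ‖v s‖ := by
    filter_upwards [hgood] with s hs
    exact norm_le_of_sq_le (norm_nonneg _) (phi_aux e (fun k => σ k s) C hs.1 hs.2 (v s)).2.1
  have hΦnΦbd : ∀ n, ∀ᵐ s ∂μT, ‖Φn n s - Φ s‖ ≤ |C| * ‖vn n s - v s‖ := by
    intro n
    filter_upwards [hgood] with s hs
    have h1 := (phi_aux e (fun k => σ k s) C hs.1 hs.2 (vn n s)).1
    have h2 := (phi_aux e (fun k => σ k s) C hs.1 hs.2 (v s)).1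
    have h3 := phi_aux e (fun k => σ k s) C hs.1 hs.2 (vn n s - v s)
    have h4 : HasSum (fun k => (⟪σ k s, vn n s - v s⟫ : ℝ) • e k) (Φn n s - Φ s) := by
      have h5 := h1.sub h2
      have h6 : (fun k => (⟪σ k s, vn n s⟫ : ℝ) • e k - (⟪σ k s, v s⟫ : ℝ) • e k) =
          fun k => (⟪σ k s, vn n s - v s⟫ : ℝ) • e k := by
        funext k
        rw [inner_sub_right, sub_smul]
      rwa [h6] at h5
    have h7 : Φn n s - Φ s = ∑' k, (⟪σ k s, vn n s - v s⟫ : ℝ) • e k := by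
      rw [h4.tsum_eq]
    rw [h7]
    exact norm_le_of_sq_le (norm_nonneg _) h3.2.1
  have hΦL2 : MemLp Φ 2 μT := by
    refine MemLp.of_le (hv.norm.const_mul |C|) hΦmeas ?_
    filter_upwards [hΦbd] with s hs
    rw [Real.norm_of_nonneg (by positivity)]
    exact hs
  have hΦnΦL2 : ∀ n, MemLp (fun s => Φn n s - Φ s) 2 μT := by
    intro n
    refine MemLp.of_le (((hvn n).sub hv).norm.const_mul |C|)
      ((hΦnmeas n).sub hΦmeas) ?_
    filter_upwards [hΦnΦbd n] with s hs
    rw [Real.norm_of_nonneg (by positivity)]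
    exact hs
  -- the integrand identity
  have hint_eq : ∀ n, ∀ᵐ s ∂μT,
      (∑' k, (⟪σ k s, vn n s⟫ : ℝ) * ⟪hn n s - h s, e k⟫) = ⟪hn n s - h s, Φn n s⟫ := by
    intro n
    filter_upwards [hgood] with s hs
    exact ((phi_aux e (fun k => σ k s) C hs.1 hs.2 (vn n s)).2.2 (hn n s - h s)).tsum_eq
  -- strong convergence of vn, in real form
  set ε : ℕ → ℝ := fun n => ∫ s, ‖vn n s - v s‖ ^ 2 ∂μT with hε
  have hεnn : ∀ n, 0 ≤ ε n := fun n => integral_nonneg fun s => sq_nonneg _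
  have hε0 : Tendsto ε atTop (𝓝 0) := by
    have h1 : ε = fun n => (∫⁻ s, ENNReal.ofReal (‖vn n s - v s‖ ^ 2) ∂μT).toReal :=
      funext fun n => integral_sq_eq_toReal ((hvn n).1.sub hv.1)
    rw [h1]
    have h2 := (ENNReal.tendsto_toReal (a := 0) (by simp)).comp hstrong
    simpa [Function.comp_def] using h2
  -- primitive of ‖Φ‖²
  have hΦsqInt : Integrable (fun s => ‖Φ s‖ ^ 2) μT :=
    (memLp_two_iff_integrable_sq_norm hΦmeas).mp hΦL2
  set GΦ : ℝ → ℝ := (Ioc (0 : ℝ) T).indicator (fun s => ‖Φ s‖ ^ 2) with hGΦ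
  have hGΦint : Integrable GΦ volume := by
    rw [hGΦ, integrable_indicator_iff measurableSet_Ioc]
    exact hΦsqInt
  set F : ℝ → ℝ := fun t => ∫ s in (0 : ℝ)..t, GΦ s with hF
  have hFcont : Continuous F := hGΦint.continuous_primitive 0
  -- constants
  set δ1 : ℝ := δ / 3 with hδ1def
  have hδ1 : 0 < δ1 := by rw [hδ1def]; linarith
  set ε₂ : ℝ := (δ1 / K) ^ 2 with hε₂def
  have hε₂pos : 0 < ε₂ := by rw [hε₂def]; positivity
  obtain ⟨η, hηpos, hηuc⟩ := Metric.uniformContinuousOn_iff.mp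
    (isCompact_Icc.uniformContinuousOn_of_continuous (s := Icc (0 : ℝ) T)
      hFcont.continuousOn) ε₂ hε₂pos
  set m : ℕ := max 1 (Nat.ceil (T / η)) with hm
  have hm1 : (1 : ℕ) ≤ m := le_max_left _ _
  have hmpos : (0 : ℝ) < (m : ℝ) := by exact_mod_cast Nat.lt_of_lt_of_le Nat.zero_lt_one hm1
  have hTm : T / (m : ℝ) ≤ η := by
    have h1 : T / η ≤ (m : ℝ) := by
      refine (Nat.le_ceil (T / η)).trans ?_
      exact_mod_cast le_max_right 1 (Nat.ceil (T / η))
    rw [div_le_iff₀ hmpos]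
    rw [div_le_iff₀ hηpos] at h1
    linarith [h1]
  -- grid points
  have hrange : ∀ i : ℕ, i ≤ m → (0 : ℝ) ≤ (i : ℝ) * T / m ∧ (i : ℝ) * T / m ≤ T := by
    intro i hi
    constructor
    · positivity
    · rw [div_le_iff₀ hmpos]
      have hcast : (i : ℝ) ≤ (m : ℝ) := by exact_mod_cast hi
      calc (i : ℝ) * T ≤ (m : ℝ) * T := mul_le_mul_of_nonneg_right hcast hT.le
        _ = T * (m : ℝ) := mul_comm _ _
  -- convergence at the grid points
  have hgrid : ∀ᶠ n in atTop, ∀ i ∈ Finset.range (m + 1),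
      |∫ s in Ioc (0 : ℝ) ((i : ℝ) * T / m), (⟪hn n s - h s, Φ s⟫ : ℝ)| < δ1 := by
    rw [eventually_all_finset]
    intro i hi
    have him : i ≤ m := Nat.lt_succ_iff.mp (Finset.mem_range.mp hi)
    obtain ⟨hr0, hrT⟩ := hrange i him
    set r : ℝ := (i : ℝ) * T / m with hr
    set g : ℝ → U := (Ioc (0 : ℝ) r).indicator Φ with hgdef
    have hgL2 : MemLp g 2 μT := hΦL2.indicator measurableSet_Ioc
    have key : ∀ (w : ℝ → U),
        (∫ s in Ioc (0 : ℝ) T, (⟪w s, g s⟫ : ℝ)) = ∫ s in Ioc (0 : ℝ) r, (⟪w s, Φ s⟫ : ℝ) := by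
      intro w
      have h1 : ∀ s, (⟪w s, g s⟫ : ℝ) =
          (Ioc (0 : ℝ) r).indicator (fun s => (⟪w s, Φ s⟫ : ℝ)) s := by
        intro s
        by_cases hs : s ∈ Ioc (0 : ℝ) r
        · rw [hgdef]; simp only [indicator_of_mem hs]
        · rw [hgdef]; simp only [indicator_of_notMem hs, inner_zero_right]
      simp_rw [h1]
      rw [setIntegral_indicator measurableSet_Ioc,
        inter_eq_self_of_subset_right (Ioc_subset_Ioc_right hrT)]
    have hwg := hweak g hgL2
    rw [key] at hwg
    have hwg' : Tendsto (fun n => ∫ s in Ioc (0 : ℝ) T, (⟪hn n s, g s⟫ : ℝ)) atTop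
        (𝓝 (∫ s in Ioc (0 : ℝ) r, (⟪h s, Φ s⟫ : ℝ))) := hwg
    have hμler : volume.restrict (Ioc (0 : ℝ) r) ≤ μT := by
      rw [hμT]
      exact Measure.restrict_mono (Ioc_subset_Ioc_right hrT) le_rfl
    have hdiff : Tendsto (fun n => ∫ s in Ioc (0 : ℝ) r, (⟪hn n s - h s, Φ s⟫ : ℝ)) atTop
        (𝓝 0) := by
      have heq : ∀ n, (∫ s in Ioc (0 : ℝ) r, (⟪hn n s - h s, Φ s⟫ : ℝ)) =
          (∫ s in Ioc (0 : ℝ) T, (⟪hn n s, g s⟫ : ℝ)) -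
            ∫ s in Ioc (0 : ℝ) r, (⟪h s, Φ s⟫ : ℝ) := by
        intro n
        rw [key]
        rw [← integral_sub (integrable_inner_of_memLp ((hhnL2 n).mono_measure hμler)
          (hΦL2.mono_measure hμler)) (integrable_inner_of_memLp (hhL2.mono_measure hμler)
          (hΦL2.mono_measure hμler))]
        refine integral_congr_ae (Eventually.of_forall fun s => ?_)
        simp [inner_sub_left]
      simp_rw [heq]
      simpa using hwg'.sub_const (∫ s in Ioc (0 : ℝ) r, (⟪h s, Φ s⟫ : ℝ))
    have := Metric.tendsto_nhds.mp hdiff δ1 hδ1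
    filter_upwards [this] with n hn'
    rw [Real.dist_eq, sub_zero] at hn'
    exact hn'
  -- smallness of the strong term
  have hstr : ∀ᶠ n in atTop, Real.sqrt (ε n) < δ1 / (K * (|C| + 1)) := by
    have h1 : Tendsto (fun n => Real.sqrt (ε n)) atTop (𝓝 0) := by
      have h2 := (Real.continuous_sqrt.tendsto 0).comp hε0
      simpa [Function.comp_def] using h2
    exact h1.eventually_lt_const (by positivity)
  obtain ⟨N₀, hN₀⟩ := eventually_atTop.mp (hgrid.and hstr)
  refine ⟨N₀, fun n hnN t ht => ?_⟩
  obtain ⟨hgridn, hstrn⟩ := hN₀ n hnN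
  -- the grid point below t
  set i : ℕ := ⌊t * m / T⌋₊ with hi
  set r : ℝ := (i : ℝ) * T / m with hr
  have htmT : 0 ≤ t * (m : ℝ) / T := div_nonneg (mul_nonneg ht.1 hmpos.le) hT.le
  have hit : (i : ℝ) ≤ t * (m : ℝ) / T := Nat.floor_le htmT
  have him : i ≤ m := by
    have h1 : t * (m : ℝ) / T ≤ (m : ℝ) := by
      rw [div_le_iff₀ hT]
      calc t * (m : ℝ) ≤ T * (m : ℝ) := mul_le_mul_of_nonneg_right ht.2 hmpos.le
        _ = (m : ℝ) * T := mul_comm _ _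
    have h2 : i ≤ ⌊(m : ℝ)⌋₊ := by rw [hi]; exact Nat.floor_mono h1
    simpa using h2
  obtain ⟨hr0, hrT⟩ := hrange i him
  have hrt : r ≤ t := by
    rw [hr, div_le_iff₀ hmpos]
    have h1 : (i : ℝ) * T ≤ t * (m : ℝ) := by
      have := mul_le_mul_of_nonneg_right hit hT.le
      rw [div_mul_cancel₀] at this
      · linarith
      · exact ne_of_gt hT
    linarith
  have htlt : t < r + T / m := by
    have h1 : t * (m : ℝ) / T < (i : ℝ) + 1 := Nat.lt_floor_add_one _
    have h2 : t * (m : ℝ) < ((i : ℝ) + 1) * T := by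
      have h3 := mul_lt_mul_of_pos_right h1 hT
      rw [div_mul_cancel₀ _ (ne_of_gt hT)] at h3
      exact h3
    have h4 : t < ((i : ℝ) * T + T) / m := (lt_div_iff₀ hmpos).mpr (by linarith [h2])
    calc t < ((i : ℝ) * T + T) / m := h4
      _ = (i : ℝ) * T / m + T / m := by ring
  have hsub : Ioc (0 : ℝ) t ⊆ Ioc (0 : ℝ) T := Ioc_subset_Ioc_right ht.2
  have hsub2 : Ioc (0 : ℝ) r ⊆ Ioc (0 : ℝ) T := Ioc_subset_Ioc_right hrT
  have hsub3 : Ioc r t ⊆ Ioc (0 : ℝ) T := fun s hs =>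
    ⟨lt_of_le_of_lt hr0 hs.1, hs.2.trans ht.2⟩
  have hμle : volume.restrict (Ioc (0 : ℝ) t) ≤ μT := by
    rw [hμT]; exact Measure.restrict_mono hsub le_rfl
  have hμle2 : volume.restrict (Ioc (0 : ℝ) r) ≤ μT := by
    rw [hμT]; exact Measure.restrict_mono hsub2 le_rfl
  have hμle3 : volume.restrict (Ioc r t) ≤ μT := by
    rw [hμT]; exact Measure.restrict_mono hsub3 le_rfl
  have husq : Integrable (fun s => ‖hn n s - h s‖ ^ 2) μT :=
    (memLp_two_iff_integrable_sq_norm (huL2 n).1).mp (huL2 n)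
  have hΦnΦsq : Integrable (fun s => ‖Φn n s - Φ s‖ ^ 2) μT :=
    (memLp_two_iff_integrable_sq_norm (hΦnΦL2 n).1).mp (hΦnΦL2 n)
  have hvsq : Integrable (fun s => ‖vn n s - v s‖ ^ 2) μT :=
    (memLp_two_iff_integrable_sq_norm ((hvn n).1.sub hv.1)).mp ((hvn n).sub hv)
  -- step 1: replace the tsum by the inner product with Φn
  have e1 : (∫ s in Ioc (0 : ℝ) t, ∑' k : ℕ, (⟪σ k s, vn n s⟫ : ℝ) * ⟪hn n s - h s, e k⟫)
      = ∫ s in Ioc (0 : ℝ) t, (⟪hn n s - h s, Φn n s⟫ : ℝ) := by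
    refine integral_congr_ae ?_
    have h1 := hint_eq n
    rw [hμT] at h1
    exact ae_restrict_of_ae_restrict_of_subset hsub h1
  -- step 2: split Φn = (Φn - Φ) + Φ
  have e2 : (∫ s in Ioc (0 : ℝ) t, (⟪hn n s - h s, Φn n s⟫ : ℝ))
      = (∫ s in Ioc (0 : ℝ) t, (⟪hn n s - h s, Φn n s - Φ s⟫ : ℝ))
        + ∫ s in Ioc (0 : ℝ) t, (⟪hn n s - h s, Φ s⟫ : ℝ) := by
    rw [← integral_add
      (integrable_inner_of_memLp ((huL2 n).mono_measure hμle) ((hΦnΦL2 n).mono_measure hμle))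
      (integrable_inner_of_memLp ((huL2 n).mono_measure hμle) (hΦL2.mono_measure hμle))]
    refine integral_congr_ae (Eventually.of_forall fun s => ?_)
    show (⟪hn n s - h s, Φn n s⟫ : ℝ)
      = (⟪hn n s - h s, Φn n s - Φ s⟫ : ℝ) + ⟪hn n s - h s, Φ s⟫
    rw [← inner_add_right, sub_add_cancel]
  -- step 3: split the time interval at the grid point
  have e4 : (∫ s in Ioc (0 : ℝ) t, (⟪hn n s - h s, Φ s⟫ : ℝ))
      = (∫ s in Ioc (0 : ℝ) r, (⟪hn n s - h s, Φ s⟫ : ℝ))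
        + ∫ s in Ioc r t, (⟪hn n s - h s, Φ s⟫ : ℝ) := by
    rw [← Ioc_union_Ioc_eq_Ioc hr0 hrt]
    exact setIntegral_union (Ioc_disjoint_Ioc_of_le le_rfl) measurableSet_Ioc
      ((integrable_inner_of_memLp (huL2 n) hΦL2).mono_measure hμle2)
      ((integrable_inner_of_memLp (huL2 n) hΦL2).mono_measure hμle3)
  have hKne : K ≠ 0 := ne_of_gt hKpos
  have hCne : |C| + 1 ≠ 0 := by positivity
  -- bound for the strong term
  have monoA1 : (∫ s in Ioc (0 : ℝ) t, ‖hn n s - h s‖ ^ 2) ≤ ∫ s, ‖hn n s - h s‖ ^ 2 ∂μT :=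
    integral_mono_measure hμle (Eventually.of_forall fun s => sq_nonneg _) husq
  have monoA2 : (∫ s in Ioc (0 : ℝ) t, ‖Φn n s - Φ s‖ ^ 2) ≤ C ^ 2 * ε n := by
    have b1 : (∫ s in Ioc (0 : ℝ) t, ‖Φn n s - Φ s‖ ^ 2) ≤ ∫ s, ‖Φn n s - Φ s‖ ^ 2 ∂μT :=
      integral_mono_measure hμle (Eventually.of_forall fun s => sq_nonneg _) hΦnΦsq
    have b2 : (∫ s, ‖Φn n s - Φ s‖ ^ 2 ∂μT) ≤ ∫ s, C ^ 2 * ‖vn n s - v s‖ ^ 2 ∂μT := by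
      refine integral_mono_ae hΦnΦsq (hvsq.const_mul (C ^ 2)) ?_
      filter_upwards [hΦnΦbd n] with s hs
      calc ‖Φn n s - Φ s‖ ^ 2 ≤ (|C| * ‖vn n s - v s‖) ^ 2 :=
            pow_le_pow_left₀ (norm_nonneg _) hs 2
        _ = C ^ 2 * ‖vn n s - v s‖ ^ 2 := by rw [mul_pow, sq_abs]
    have b3 : (∫ s, C ^ 2 * ‖vn n s - v s‖ ^ 2 ∂μT) = C ^ 2 * ε n := by
      rw [hε, integral_const_mul]
    linarith
  have hA : |∫ s in Ioc (0 : ℝ) t, (⟪hn n s - h s, Φn n s - Φ s⟫ : ℝ)| ≤ δ1 := by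
    refine ((abs_integral_inner_le ((huL2 n).mono_measure hμle)
      ((hΦnΦL2 n).mono_measure hμle)).trans ?_)
    have s1 : Real.sqrt (∫ s in Ioc (0 : ℝ) t, ‖hn n s - h s‖ ^ 2) ≤ K :=
      (Real.sqrt_le_sqrt monoA1).trans (hKb n)
    have s2 : Real.sqrt (∫ s in Ioc (0 : ℝ) t, ‖Φn n s - Φ s‖ ^ 2)
        ≤ |C| * Real.sqrt (ε n) := by
      refine (Real.sqrt_le_sqrt monoA2).trans (le_of_eq ?_)
      rw [Real.sqrt_mul (sq_nonneg C), Real.sqrt_sq_eq_abs]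
    have s3 : Real.sqrt (ε n) ≤ δ1 / (K * (|C| + 1)) := le_of_lt hstrn
    calc Real.sqrt (∫ s in Ioc (0 : ℝ) t, ‖hn n s - h s‖ ^ 2)
          * Real.sqrt (∫ s in Ioc (0 : ℝ) t, ‖Φn n s - Φ s‖ ^ 2)
        ≤ K * (|C| * Real.sqrt (ε n)) := by
          refine mul_le_mul s1 s2 (Real.sqrt_nonneg _) hKpos.le
      _ ≤ K * ((|C| + 1) * (δ1 / (K * (|C| + 1)))) := by
          refine mul_le_mul_of_nonneg_left ?_ hKpos.le
          refine mul_le_mul (by linarith [abs_nonneg C]) s3 (Real.sqrt_nonneg _) (by positivity)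
      _ = δ1 := by
          field_simp
  -- bound for the tail term
  have monoT1 : (∫ s in Ioc r t, ‖hn n s - h s‖ ^ 2) ≤ ∫ s, ‖hn n s - h s‖ ^ 2 ∂μT :=
    integral_mono_measure hμle3 (Eventually.of_forall fun s => sq_nonneg _) husq
  have monoT2 : (∫ s in Ioc r t, ‖Φ s‖ ^ 2) ≤ ε₂ := by
    have e5 : (∫ s in Ioc r t, ‖Φ s‖ ^ 2) = ∫ s in Ioc r t, GΦ s := by
      refine (setIntegral_congr_fun measurableSet_Ioc fun s hs => ?_)
      rw [hGΦ, indicator_of_mem (hsub3 hs)]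
    have e6 : (∫ s in Ioc r t, GΦ s) = F t - F r := by
      rw [← intervalIntegral.integral_of_le hrt, hF]
      exact (intervalIntegral.integral_interval_sub_left
        (hGΦint.intervalIntegrable) (hGΦint.intervalIntegrable)).symm
    have e7 : dist (F t) (F r) < ε₂ := by
      refine hηuc t (mem_Icc.mpr ht) r (mem_Icc.mpr ⟨hr0, hrT⟩) ?_
      rw [Real.dist_eq, abs_of_nonneg (by linarith)]
      linarith
    rw [e5, e6]
    calc F t - F r ≤ |F t - F r| := le_abs_self _
      _ = dist (F t) (F r) := (Real.dist_eq _ _).symm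
      _ ≤ ε₂ := e7.le
  have htail : |∫ s in Ioc r t, (⟪hn n s - h s, Φ s⟫ : ℝ)| ≤ δ1 := by
    refine (abs_integral_inner_le ((huL2 n).mono_measure hμle3)
      (hΦL2.mono_measure hμle3)).trans ?_
    have s1 : Real.sqrt (∫ s in Ioc r t, ‖hn n s - h s‖ ^ 2) ≤ K :=
      (Real.sqrt_le_sqrt monoT1).trans (hKb n)
    have s2 : Real.sqrt (∫ s in Ioc r t, ‖Φ s‖ ^ 2) ≤ δ1 / K := by
      refine (Real.sqrt_le_sqrt monoT2).trans (le_of_eq ?_)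
      rw [hε₂def, Real.sqrt_sq (by positivity)]
    calc Real.sqrt (∫ s in Ioc r t, ‖hn n s - h s‖ ^ 2)
          * Real.sqrt (∫ s in Ioc r t, ‖Φ s‖ ^ 2)
        ≤ K * (δ1 / K) := mul_le_mul s1 s2 (Real.sqrt_nonneg _) hKpos.le
      _ = δ1 := by field_simp
  -- bound for the grid term
  have hB : |∫ s in Ioc (0 : ℝ) r, (⟪hn n s - h s, Φ s⟫ : ℝ)| ≤ δ1 := by
    have h1 := hgridn i (Finset.mem_range.mpr (Nat.lt_succ_of_le him))
    rw [hr]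
    exact h1.le
  -- conclusion
  rw [e1, e2, e4]
  calc |(∫ s in Ioc (0 : ℝ) t, (⟪hn n s - h s, Φn n s - Φ s⟫ : ℝ))
        + ((∫ s in Ioc (0 : ℝ) r, (⟪hn n s - h s, Φ s⟫ : ℝ))
          + ∫ s in Ioc r t, (⟪hn n s - h s, Φ s⟫ : ℝ))|
      ≤ |∫ s in Ioc (0 : ℝ) t, (⟪hn n s - h s, Φn n s - Φ s⟫ : ℝ)|
        + (|∫ s in Ioc (0 : ℝ) r, (⟪hn n s - h s, Φ s⟫ : ℝ)|
          + |∫ s in Ioc r t, (⟪hn n s - h s, Φ s⟫ : ℝ)|) :=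
        (abs_add_le _ _).trans (add_le_add le_rfl (abs_add_le _ _))
    _ ≤ δ1 + (δ1 + δ1) := add_le_add hA (add_le_add hB htail)
    _ = δ := by rw [hδ1def]; ring
end
end
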